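/- Let φ : B(H) → B(H) be an additive map on the bounded operators of an infinite-dimensional complex Hilbert space such that H_{φ(T)}({λ}) = H_T({λ}) for every T ∈ B(H) and λ ∈ ℂ. Then φ is the identity map. -/

import Mathlib

open scoped InnerProductSpace Pointwise
open ContinuousLinearMap

variable {H : Type*} [NormedAddCommGroup H] [InnerProductSpace ℂ H] [CompleteSpace H]

/-- The local resolvent set of `T` at `x`. -/
def localResolvent (T : H →L[ℂ] H) (x : H) : Set ℂ :=
  {μ | ∃ U : Set ℂ, IsOpen U ∧ μ ∈ U ∧ ∃ f : ℂ → H, AnalyticOnNhd ℂ f U ∧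
      ∀ z ∈ U, z • f z - T (f z) = x}

/-- The local spectrum of `T` at `x`. -/
def localSpectrum (T : H →L[ℂ] H) (x : H) : Set ℂ := (localResolvent T x)ᶜ

/-- The local spectral subspace `H_T(F)`. -/
def localSubspace (T : H →L[ℂ] H) (F : Set ℂ) : Set H :=
  {x | localSpectrum T x ⊆ F}

/-- The rank-one operator `x ⊗ y : z ↦ ⟨z,y⟩x` (inner product conjugate-linear in
the second variable, i.e. `⟪y, z⟫` in Mathlib's convention). -/
noncomputable def rankOne (x y : H) : H →L[ℂ] H := (innerSL ℂ y).smulRight x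

/-- The single-valued extension property. -/
def HasSVEP (T : H →L[ℂ] H) : Prop :=
  ∀ U : Set ℂ, IsOpen U → ∀ f : ℂ → H, AnalyticOnNhd ℂ f U →
    (∀ μ ∈ U, μ • f μ - T (f μ) = 0) → ∀ μ ∈ U, f μ = 0

local notation "⟪" x ", " y "⟫" => @inner ℂ _ _ x y
open Filter Topology Set

lemma rankOne_apply (x y z : H) : rankOne x y z = ⟪y, z⟫ • x := rfl

lemma rankOne_add_right (x y y' : H) :
    rankOne x (y + y') = rankOne x y + rankOne x y' := by
  ext z; simp [rankOne_apply, inner_add_left, add_smul]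

/-- membership extraction -/
lemma exists_sol_of_mem {T : H →L[ℂ] H} {x : H} {lam μ : ℂ}
    (h : x ∈ localSubspace T {lam}) (hμ : μ ≠ lam) :
    ∃ U : Set ℂ, IsOpen U ∧ μ ∈ U ∧ ∃ f : ℂ → H, AnalyticOnNhd ℂ f U ∧
      ∀ z ∈ U, z • f z - T (f z) = x := by
  by_contra hc
  have : μ ∈ localSpectrum T x := hc
  exact hμ (h this)

/-- eigenvector lemma -/
lemma mem_localSubspace_of_eigen {T : H →L[ℂ] H} {x : H} {lam : ℂ}
    (h : T x = lam • x) : x ∈ localSubspace T {lam} := by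
  intro μ hμ
  by_contra hne
  refine hμ ?_
  refine ⟨{lam}ᶜ, isOpen_compl_singleton, hne, fun z => (z - lam)⁻¹ • x, ?_, ?_⟩
  · apply AnalyticOnNhd.smul
    · exact AnalyticOnNhd.inv (analyticOnNhd_id.sub analyticOnNhd_const)
        (fun z hz => sub_ne_zero.mpr hz)
    · exact analyticOnNhd_const
  · intro z hz
    have hz' : z - lam ≠ 0 := sub_ne_zero.mpr hz
    rw [map_smul, h, smul_smul, smul_smul, ← sub_smul]
    have h1 : z * (z - lam)⁻¹ - (z - lam)⁻¹ * lam = 1 := by field_simp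
    rw [h1, one_smul]

/-- invariance of local subspaces -/
lemma apply_mem_localSubspace {T : H →L[ℂ] H} {x : H} {F : Set ℂ}
    (h : x ∈ localSubspace T F) : T x ∈ localSubspace T F := by
  intro μ hμ
  by_cases hres : μ ∈ localResolvent T x
  · exfalso
    apply hμ
    obtain ⟨U, hU, hμU, f, hf, hsol⟩ := hres
    refine ⟨U, hU, hμU, fun z => T (f z), ?_, ?_⟩
    · exact fun z hz => (T.analyticAt (f z)).comp (hf z hz)
    · intro z hz
      have hs := hsol z hz
      calc z • T (f z) - T (T (f z)) = T (z • f z - T (f z)) := by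
            rw [map_sub, map_smul]
        _ = T x := by rw [hs]
  · exact h hres

/-- Lemma F : adjoint-eigen functional kills members of other local subspaces -/
lemma lemF {S : H →L[ℂ] H} {x e : H} {lam μ : ℂ}
    (hx : x ∈ localSubspace S {lam}) (hμ : μ ≠ lam)
    (he : ∀ z : H, ⟪e, S z⟫ = μ * ⟪e, z⟫) : ⟪e, x⟫ = 0 := by
  obtain ⟨U, hU, hμU, f, hf, hsol⟩ := exists_sol_of_mem hx hμ
  have := hsol μ hμU
  have h2 : ⟪e, μ • f μ - S (f μ)⟫ = ⟪e, x⟫ := by rw [this]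
  rw [inner_sub_right, inner_smul_right, he] at h2
  simpa using h2.symm

open Filter Topology Set in
lemma lim_lemma {S : H →L[ℂ] H} {x : H} {lam p : ℂ} {s : Set ℂ} (hs : s.Finite)
    (hx : x ∈ localSubspace S {lam}) (hp : p ≠ lam)
    {r : ℂ → H} (huniq : ∀ z ∉ s, ∀ y : H, z • y - S y = x → y = r z)
    {L : H} (hlim : Filter.Tendsto (fun z => (z - p) • r z) (𝓝[sᶜ \ {p}] p) (𝓝 L)) :
    L = 0 := by
  obtain ⟨U, hU, hpU, f, hf, hsol⟩ := exists_sol_of_mem hx hp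
  have hfilter : 𝓝[sᶜ \ {p}] p = 𝓝[≠] p := by
    have h1 : sᶜ \ {p} = (s \ {p})ᶜ ∩ {p}ᶜ := by
      ext z; simp only [Set.mem_diff, Set.mem_compl_iff, Set.mem_inter_iff,
        Set.mem_singleton_iff]; tauto
    rw [h1]
    apply nhdsWithin_inter_of_mem
    apply mem_nhdsWithin_of_mem_nhds
    exact ((hs.subset diff_subset).isClosed.isOpen_compl).mem_nhds (by simp)
  have hne : (𝓝[sᶜ \ {p}] p).NeBot := by rw [hfilter]; infer_instance
  have h0 : Filter.Tendsto (fun z => (z - p) • f z) (𝓝[sᶜ \ {p}] p) (𝓝 0) := by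
    have : Filter.Tendsto (fun z => (z - p) • f z) (𝓝 p) (𝓝 ((p - p) • f p)) :=
      ((continuousAt_id.sub continuousAt_const).smul (hf p hpU).continuousAt)
    simpa using this.mono_left nhdsWithin_le_nhds
  have hev : ∀ᶠ z in 𝓝[sᶜ \ {p}] p, (z - p) • r z = (z - p) • f z := by
    have hUev : ∀ᶠ z in 𝓝[sᶜ \ {p}] p, z ∈ U :=
      mem_nhdsWithin_of_mem_nhds (hU.mem_nhds hpU)
    have hself : ∀ᶠ z in 𝓝[sᶜ \ {p}] p, z ∈ sᶜ \ {p} := eventually_mem_nhdsWithin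
    filter_upwards [hUev, hself] with z hzU hzs
    rw [huniq z hzs.1 (f z) (hsol z hzU)]
  exact tendsto_nhds_unique (hlim.congr' hev) h0

lemma G1_uniq {u v x y : H} {z : ℂ} (hz : z ≠ 0) (hzα : z ≠ ⟪v,u⟫)
    (hy : z • y - rankOne u v y = x) :
    y = z⁻¹ • x + (z⁻¹ * (z - ⟪v,u⟫)⁻¹ * ⟪v,x⟫) • u := by
  set α := ⟪v,u⟫ with hα
  have hvx : ⟪v,x⟫ = (z - α) * ⟪v,y⟫ := by
    rw [← hy]; simp only [inner_sub_right, inner_smul_right, rankOne_apply]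
    ring
  have hvy : ⟪v,y⟫ = (z - α)⁻¹ * ⟪v,x⟫ := by
    rw [hvx]; field_simp [sub_ne_zero.mpr hzα]
  have hy2 : z • y = x + (⟪v,y⟫) • u := by
    rw [← hy]; simp [rankOne_apply]
  have := congrArg (fun w => z⁻¹ • w) hy2
  simp only [smul_smul, inv_mul_cancel₀ hz, one_smul, smul_add] at this
  rw [this, hvy]
  ring_nf

lemma G1a {u v x : H} {lam : ℂ} (hα : ⟪v,u⟫ ≠ 0) (hlam : lam ≠ 0)
    (hx : x ∈ localSubspace (rankOne u v) {lam}) :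
    x = (⟪v,u⟫⁻¹ * ⟪v,x⟫) • u := by
  set α := ⟪v,u⟫ with hαdef
  have key : x + ((0 - α)⁻¹ * ⟪v,x⟫) • u = 0 := by
    apply lim_lemma (s := {0, α}) (Set.toFinite _) hx hlam.symm
      (r := fun z => z⁻¹ • x + (z⁻¹ * (z - α)⁻¹ * ⟪v,x⟫) • u)
    · intro z hz y hy
      exact G1_uniq (fun h => hz (by simp [h])) (fun h => hz (by simp [h, hαdef])) hy
    · have hcont : Filter.Tendsto (fun z : ℂ => x + ((z - α)⁻¹ * ⟪v,x⟫) • u)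
          (𝓝 (0:ℂ)) (𝓝 (x + ((0 - α)⁻¹ * ⟪v,x⟫) • u)) := by
        apply ContinuousAt.tendsto
        exact continuousAt_const.add
          ((((continuousAt_id.sub continuousAt_const).inv₀
            (by simpa using hα : (0:ℂ) - α ≠ 0)).mul
            continuousAt_const).smul continuousAt_const)
      have hev : ∀ᶠ z in 𝓝[({0,α} : Set ℂ)ᶜ \ {0}] (0:ℂ),
          x + ((z - α)⁻¹ * ⟪v,x⟫) • u
            = (z - 0) • (z⁻¹ • x + (z⁻¹ * (z - α)⁻¹ * ⟪v,x⟫) • u) := by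
        filter_upwards [eventually_mem_nhdsWithin] with z hz
        have hz0 : z ≠ 0 := fun h => hz.1 (by simp [h])
        rw [sub_zero, smul_add, smul_smul, smul_smul, mul_inv_cancel₀ hz0, one_smul]
        congr 2
        rw [show z * (z⁻¹ * (z - α)⁻¹ * ⟪v, x⟫)
              = (z * z⁻¹) * ((z - α)⁻¹ * ⟪v, x⟫) by ring,
          mul_inv_cancel₀ hz0, one_mul]
      exact (hcont.mono_left nhdsWithin_le_nhds).congr' hev
  have h0 : ((0:ℂ) - α)⁻¹ = -α⁻¹ := by rw [zero_sub, inv_neg]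
  rw [h0, neg_mul, neg_smul, add_neg_eq_zero] at key
  exact key

lemma G1b {u v x : H} {lam : ℂ} (hα : ⟪v,u⟫ ≠ 0) (hlam : lam ≠ ⟪v,u⟫)
    (hx : x ∈ localSubspace (rankOne u v) {lam}) : ⟪v,x⟫ = 0 := by
  set α := ⟪v,u⟫ with hαdef
  have hu : u ≠ 0 := fun h => hα (by simp [hαdef, h])
  have key : ((α - α) * α⁻¹) • x + (α⁻¹ * ⟪v,x⟫) • u = 0 := by
    apply lim_lemma (s := {0, α}) (Set.toFinite _) hx (fun h => hlam h.symm)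
      (r := fun z => z⁻¹ • x + (z⁻¹ * (z - α)⁻¹ * ⟪v,x⟫) • u)
    · intro z hz y hy
      exact G1_uniq (fun h => hz (by simp [h])) (fun h => hz (by simp [h, hαdef])) hy
    · have hcont : Filter.Tendsto
          (fun z : ℂ => ((z - α) * z⁻¹) • x + (z⁻¹ * ⟪v,x⟫) • u)
          (𝓝 α) (𝓝 (((α - α) * α⁻¹) • x + (α⁻¹ * ⟪v,x⟫) • u)) := by
        apply ContinuousAt.tendsto
        exact (((continuousAt_id.sub continuousAt_const).mul
            (continuousAt_id.inv₀ hα)).smul continuousAt_const).add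
          (((continuousAt_id.inv₀ hα).mul continuousAt_const).smul continuousAt_const)
      have hev : ∀ᶠ z in 𝓝[({0,α} : Set ℂ)ᶜ \ {α}] α,
          ((z - α) * z⁻¹) • x + (z⁻¹ * ⟪v,x⟫) • u
            = (z - α) • (z⁻¹ • x + (z⁻¹ * (z - α)⁻¹ * ⟪v,x⟫) • u) := by
        filter_upwards [eventually_mem_nhdsWithin] with z hz
        have hz0 : z ≠ 0 := fun h => hz.1 (by simp [h])
        have hzα : z - α ≠ 0 := sub_ne_zero.mpr (fun h => hz.1 (by simp [h]))
        rw [smul_add, smul_smul, smul_smul]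
        congr 2
        rw [show (z - α) * (z⁻¹ * (z - α)⁻¹ * ⟪v, x⟫)
              = ((z - α) * (z - α)⁻¹) * (z⁻¹ * ⟪v, x⟫) by ring,
          mul_inv_cancel₀ hzα, one_mul]
      exact (hcont.mono_left nhdsWithin_le_nhds).congr' hev
  rw [sub_self, zero_mul, zero_smul, zero_add] at key
  rcases smul_eq_zero.mp key with h | h
  · exact (mul_eq_zero.mp h).resolve_left (inv_ne_zero hα)
  · exact absurd h hu

lemma G2_uniq {u v u' v' x y : H} {z : ℂ}
    (hz : z ≠ 0) (hzα : z ≠ ⟪v,u⟫) (hzα' : z ≠ ⟪v',u'⟫)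
    (h1 : ⟪v,u'⟫ = 0) (h2 : ⟪v',u⟫ = 0)
    (hy : z • y - (rankOne u v + rankOne u' v') y = x) :
    y = z⁻¹ • x + (z⁻¹ * (z - ⟪v,u⟫)⁻¹ * ⟪v,x⟫) • u
        + (z⁻¹ * (z - ⟪v',u'⟫)⁻¹ * ⟪v',x⟫) • u' := by
  set α := ⟪v,u⟫
  set α' := ⟪v',u'⟫
  have hSy : (rankOne u v + rankOne u' v') y = ⟪v,y⟫ • u + ⟪v',y⟫ • u' := by
    simp [rankOne_apply]
  have hvy : ⟪v,y⟫ = (z - α)⁻¹ * ⟪v,x⟫ := by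
    have : ⟪v,x⟫ = (z - α) * ⟪v,y⟫ := by
      rw [← hy, hSy]
      simp only [inner_sub_right, inner_add_right, inner_smul_right, h1]
      ring
    rw [this]; field_simp [sub_ne_zero.mpr hzα]
  have hvy' : ⟪v',y⟫ = (z - α')⁻¹ * ⟪v',x⟫ := by
    have : ⟪v',x⟫ = (z - α') * ⟪v',y⟫ := by
      rw [← hy, hSy]
      simp only [inner_sub_right, inner_add_right, inner_smul_right, h2]
      ring
    rw [this]; field_simp [sub_ne_zero.mpr hzα']
  have hy2 : z • y = x + ⟪v,y⟫ • u + ⟪v',y⟫ • u' := by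
    rw [← hy, hSy]; abel
  have := congrArg (fun w => z⁻¹ • w) hy2
  simp only [smul_smul, inv_mul_cancel₀ hz, one_smul, smul_add] at this
  rw [this, hvy, hvy']
  ring_nf

lemma G2b_half {u v u' v' x : H} (hα : ⟪v,u⟫ ≠ 0) (hα' : ⟪v',u'⟫ ≠ 0)
    (hne : ⟪v,u⟫ ≠ ⟪v',u'⟫) (h1 : ⟪v,u'⟫ = 0) (h2 : ⟪v',u⟫ = 0)
    (hx : x ∈ localSubspace (rankOne u v + rankOne u' v') {0}) : ⟪v,x⟫ = 0 := by
  set α := ⟪v,u⟫ with hαdef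
  set α' := ⟪v',u'⟫ with hα'def
  have hu : u ≠ 0 := fun h => hα (by simp [hαdef, h])
  have key : ((α - α) * α⁻¹) • x + (α⁻¹ * ⟪v,x⟫) • u
      + ((α - α) * α⁻¹ * (α - α')⁻¹ * ⟪v',x⟫) • u' = 0 := by
    apply lim_lemma (s := {0, α, α'}) (Set.toFinite _) hx hα
      (r := fun z => z⁻¹ • x + (z⁻¹ * (z - α)⁻¹ * ⟪v,x⟫) • u
        + (z⁻¹ * (z - α')⁻¹ * ⟪v',x⟫) • u')
    · intro z hz y hy
      exact G2_uniq (fun h => hz (by simp [h])) (fun h => hz (by simp [h, hαdef, hα'def]))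
        (fun h => hz (by simp [h, hαdef, hα'def])) h1 h2 hy
    · have hcont : Filter.Tendsto
          (fun z : ℂ => ((z - α) * z⁻¹) • x + (z⁻¹ * ⟪v,x⟫) • u
            + ((z - α) * z⁻¹ * (z - α')⁻¹ * ⟪v',x⟫) • u')
          (𝓝 α) (𝓝 (((α - α) * α⁻¹) • x + (α⁻¹ * ⟪v,x⟫) • u
            + ((α - α) * α⁻¹ * (α - α')⁻¹ * ⟪v',x⟫) • u')) := by
        apply ContinuousAt.tendsto
        have hzinv : ContinuousAt (fun z : ℂ => z⁻¹) α := continuousAt_id.inv₀ hα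
        have hsub : ContinuousAt (fun z : ℂ => z - α) α :=
          continuousAt_id.sub continuousAt_const
        have hsub' : ContinuousAt (fun z : ℂ => (z - α')⁻¹) α :=
          (continuousAt_id.sub continuousAt_const).inv₀ (sub_ne_zero.mpr hne)
        exact (((hsub.mul hzinv).smul continuousAt_const).add
            ((hzinv.mul continuousAt_const).smul continuousAt_const)).add
          ((((hsub.mul hzinv).mul hsub').mul continuousAt_const).smul
            continuousAt_const)
      have hev : ∀ᶠ z in 𝓝[({0, α, α'} : Set ℂ)ᶜ \ {α}] α,
          ((z - α) * z⁻¹) • x + (z⁻¹ * ⟪v,x⟫) • u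
            + ((z - α) * z⁻¹ * (z - α')⁻¹ * ⟪v',x⟫) • u'
          = (z - α) • (z⁻¹ • x + (z⁻¹ * (z - α)⁻¹ * ⟪v,x⟫) • u
            + (z⁻¹ * (z - α')⁻¹ * ⟪v',x⟫) • u') := by
        filter_upwards [eventually_mem_nhdsWithin] with z hz
        have hzα : z - α ≠ 0 := sub_ne_zero.mpr (fun h => hz.1 (by simp [h]))
        rw [smul_add, smul_add, smul_smul, smul_smul, smul_smul]
        congr 2
        rw [show (z - α) * (z⁻¹ * (z - α)⁻¹ * ⟪v, x⟫)
              = ((z - α) * (z - α)⁻¹) * (z⁻¹ * ⟪v, x⟫) by ring,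
          mul_inv_cancel₀ hzα, one_mul]
        ring
      exact (hcont.mono_left nhdsWithin_le_nhds).congr' hev
  rw [sub_self, zero_mul, zero_mul, zero_mul, zero_smul, zero_smul, zero_add,
    add_zero] at key
  rcases smul_eq_zero.mp key with h | h
  · exact (mul_eq_zero.mp h).resolve_left (inv_ne_zero hα)
  · exact absurd h hu

lemma G2b {u v u' v' x : H} (hα : ⟪v,u⟫ ≠ 0) (hα' : ⟪v',u'⟫ ≠ 0)
    (hne : ⟪v,u⟫ ≠ ⟪v',u'⟫) (h1 : ⟪v,u'⟫ = 0) (h2 : ⟪v',u⟫ = 0)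
    (hx : x ∈ localSubspace (rankOne u v + rankOne u' v') {0}) :
    ⟪v,x⟫ = 0 ∧ ⟪v',x⟫ = 0 := by
  refine ⟨G2b_half hα hα' hne h1 h2 hx, ?_⟩
  rw [add_comm] at hx
  exact G2b_half hα' hα (Ne.symm hne) h2 h1 hx

lemma span2 {u z y : H} (hu : u ≠ 0)
    (h : ∀ w : H, ⟪w,u⟫ = 0 → ⟪w,z⟫ = 0 → ⟪w,y⟫ = 0) :
    ∃ β γ : ℂ, y = β • u + γ • z := by
  have huu : ⟪u,u⟫ ≠ 0 := inner_self_ne_zero.mpr hu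
  set c := ⟪u,z⟫ / ⟪u,u⟫ with hcdef
  set f₂ := z - c • u with hf₂def
  have huf₂ : ⟪u,f₂⟫ = 0 := by
    simp only [hf₂def, inner_sub_right, inner_smul_right, hcdef]
    field_simp
    ring
  have hf₂u : ⟪f₂,u⟫ = 0 := by
    rw [← inner_conj_symm, huf₂, map_zero]
  have hcu : ∀ d : ℂ, ∀ w : H, ⟪w,u⟫ = 0 → ⟪w, d • u⟫ = 0 := by
    intro d w hw; rw [inner_smul_right, hw, mul_zero]
  set a := ⟪u,y⟫ / ⟪u,u⟫ with hadef
  by_cases hf₂0 : f₂ = 0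
  · -- z is a multiple of u
    have hz : z = c • u := sub_eq_zero.mp hf₂0
    set w := y - a • u with hwdef
    have hwu : ⟪w,u⟫ = 0 := by
      simp only [hwdef, inner_sub_left, inner_smul_left, hadef, map_div₀,
        inner_conj_symm]
      field_simp
      ring
    have hwz : ⟪w,z⟫ = 0 := by rw [hz]; exact hcu _ _ hwu
    have hwy : ⟪w,y⟫ = 0 := h w hwu hwz
    have hww : ⟪w,w⟫ = 0 := by
      conv_lhs => rw [hwdef]
      rw [inner_sub_right, inner_smul_right, hwy, hwu, mul_zero, sub_zero]
    have hw0 : w = 0 := inner_self_eq_zero.mp hww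
    refine ⟨a, 0, ?_⟩
    rw [zero_smul, add_zero]
    exact sub_eq_zero.mp hw0
  · have hff : ⟪f₂,f₂⟫ ≠ 0 := inner_self_ne_zero.mpr hf₂0
    set b := ⟪f₂,y⟫ / ⟪f₂,f₂⟫ with hbdef
    set w := y - a • u - b • f₂ with hwdef
    have hwu : ⟪w,u⟫ = 0 := by
      simp only [hwdef, inner_sub_left, inner_smul_left, hadef, hbdef, map_div₀,
        inner_conj_symm, hf₂u]
      field_simp
      ring
    have hwf₂ : ⟪w,f₂⟫ = 0 := by
      simp only [hwdef, inner_sub_left, inner_smul_left, hadef, hbdef, map_div₀,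
        inner_conj_symm, huf₂]
      field_simp
      ring
    have hwz : ⟪w,z⟫ = 0 := by
      have hz2 : z = f₂ + c • u := by rw [hf₂def]; abel
      rw [hz2, inner_add_right, hwf₂, zero_add]
      exact hcu _ _ hwu
    have hwy : ⟪w,y⟫ = 0 := h w hwu hwz
    have hww : ⟪w,w⟫ = 0 := by
      conv_lhs => rw [hwdef]
      rw [inner_sub_right, inner_sub_right, inner_smul_right, inner_smul_right,
        hwy, hwu, hwf₂, mul_zero, mul_zero, sub_zero, sub_zero]
    have hw0 : w = 0 := inner_self_eq_zero.mp hww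
    have hy : y = a • u + b • f₂ := by
      have h2 : y - (a • u + b • f₂) = 0 := by rw [← hw0, hwdef]; abel
      have := sub_eq_zero.mp h2
      exact this
    refine ⟨a - b * c, b, ?_⟩
    rw [hy, hf₂def, smul_sub, smul_smul, sub_smul]
    abel

section Phi

variable {φ : (H →L[ℂ] H) → (H →L[ℂ] H)}
  (hadd : ∀ T S : H →L[ℂ] H, φ (T + S) = φ T + φ S)
  (hloc : ∀ (T : H →L[ℂ] H) (lam : ℂ),
      localSubspace (φ T) {lam} = localSubspace T {lam})

include hloc

/-- single rank one : hyperplane quasi-invariance -/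
lemma S1 {u v : H} (hα : ⟪v,u⟫ ≠ 0) {k : H} (hk : ⟪v,k⟫ = 0) :
    ⟪v, φ (rankOne u v) k⟫ = 0 := by
  have hk1 : k ∈ localSubspace (rankOne u v) {0} :=
    mem_localSubspace_of_eigen (by rw [rankOne_apply, hk, zero_smul, zero_smul])
  rw [← hloc (rankOne u v) 0] at hk1
  have hk2 := apply_mem_localSubspace hk1
  rw [hloc (rankOne u v) 0] at hk2
  exact G1b hα (Ne.symm hα) hk2

/-- single rank one : eigenvector is preserved -/
lemma S2 {u v : H} (hα : ⟪v,u⟫ ≠ 0) :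
    φ (rankOne u v) u = ⟪v,u⟫ • u := by
  have hu1 : u ∈ localSubspace (rankOne u v) {⟪v,u⟫} :=
    mem_localSubspace_of_eigen (by rw [rankOne_apply])
  rw [← hloc (rankOne u v) ⟪v,u⟫] at hu1
  have hu2 := apply_mem_localSubspace hu1
  rw [hloc (rankOne u v) ⟪v,u⟫] at hu2
  have hBu := G1a hα hα hu2
  set s := ⟪v,u⟫⁻¹ * ⟪v, φ (rankOne u v) u⟫ with hs
  by_cases hsα : s = ⟪v,u⟫
  · rw [hBu, hsα]
  · exfalso
    have hu3 : u ∈ localSubspace (φ (rankOne u v)) {s} :=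
      mem_localSubspace_of_eigen hBu
    rw [hloc (rankOne u v) s] at hu3
    exact hα (G1b hα hsα hu3)

include hadd

/-- pair lemma -/
lemma PAIR {u v : H} (hα : ⟪v,u⟫ ≠ 0) {w k : H} (hw : ⟪w,u⟫ = 0)
    (hkv : ⟪v,k⟫ = 0) (hkw : ⟪w,k⟫ = 0) :
    ⟪w, φ (rankOne u v) k⟫ = 0 := by
  by_cases hw0 : w = 0
  · simp [hw0]
  have hv0 : v ≠ 0 := fun h => hα (by simp [h])
  have hvv : ⟪v,v⟫ ≠ 0 := inner_self_ne_zero.mpr hv0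
  set u' := w - (⟪v,w⟫ / ⟪v,v⟫) • v with hu'def
  have hvu' : ⟪v,u'⟫ = 0 := by
    simp only [hu'def, inner_sub_right, inner_smul_right]
    field_simp
    ring
  have hwu' : ⟪w,u'⟫ = ⟪u',u'⟫ := by
    have hw2 : w = u' + (⟪v,w⟫ / ⟪v,v⟫) • v := by rw [hu'def]; abel
    conv_lhs => rw [hw2]
    rw [inner_add_left, inner_smul_left, hvu', mul_zero, add_zero]
  have hu'0 : u' ≠ 0 := by
    intro h0
    have hw2 : w = (⟪v,w⟫ / ⟪v,v⟫) • v := by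
      have h3 : w - (⟪v,w⟫ / ⟪v,v⟫) • v = 0 := by rw [← hu'def]; exact h0
      exact sub_eq_zero.mp h3
    have h4 : ⟪w,u⟫ = (starRingEnd ℂ) (⟪v,w⟫ / ⟪v,v⟫) * ⟪v,u⟫ := by
      conv_lhs => rw [hw2]
      rw [inner_smul_left]
    rw [hw] at h4
    have h5 : (starRingEnd ℂ) (⟪v,w⟫ / ⟪v,v⟫) = 0 :=
      (mul_eq_zero.mp h4.symm).resolve_right hα
    have h6 : ⟪v,w⟫ / ⟪v,v⟫ = 0 := by
      simpa using congrArg (starRingEnd ℂ) h5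
    exact hw0 (by rw [hw2, h6, zero_smul])
  have hu'u' : ⟪u',u'⟫ ≠ 0 := inner_self_ne_zero.mpr hu'0
  set t : ℂ := if ⟪u',u'⟫ = ⟪v,u⟫ then 2 else 1 with htdef
  have ht0 : t ≠ 0 := by
    rw [htdef]; split <;> norm_num
  set u'' := t • u' with hu''def
  have hα'' : ⟪w,u''⟫ = t * ⟪u',u'⟫ := by
    rw [hu''def, inner_smul_right, hwu']
  have hα''0 : ⟪w,u''⟫ ≠ 0 := by
    rw [hα'']; exact mul_ne_zero ht0 hu'u'
  have hα''ne : ⟪v,u⟫ ≠ ⟪w,u''⟫ := by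
    rw [hα'', htdef]
    split
    · rename_i hcase
      rw [hcase]
      intro hcon
      exact hα (by linear_combination -hcon)
    · rename_i hcase
      rw [one_mul]
      exact fun hcon => hcase hcon.symm
  have hvu'' : ⟪v,u''⟫ = 0 := by rw [hu''def, inner_smul_right, hvu', mul_zero]
  -- the pair operator
  set R := rankOne u v with hR
  set R' := rankOne u'' w with hR'
  have hSk : (R + R') k = (0:ℂ) • k := by
    simp [hR, hR', rankOne_apply, hkv, hkw]
  have hk1 : k ∈ localSubspace (R + R') {0} := mem_localSubspace_of_eigen hSk
  rw [← hloc (R + R') 0] at hk1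
  have hk2 := apply_mem_localSubspace hk1
  rw [hloc (R + R') 0, hadd R R'] at hk2
  have hG2 := (G2b hα hα''0 hα''ne hvu'' hw hk2).2
  have hS1' : ⟪w, φ R' k⟫ = 0 := S1 hloc hα''0 hkw
  have hfinal : ⟪w, φ R k⟫ + ⟪w, φ R' k⟫ = 0 := by
    rw [← inner_add_right, ← ContinuousLinearMap.add_apply]
    exact hG2
  rw [hS1', add_zero] at hfinal
  exact hfinal

/-- vanishing on the hyperplane -/
lemma ZERO {u v : H} (hα : ⟪v,u⟫ ≠ 0) {z₀ : H} (hz₀ : ⟪v,z₀⟫ = 0) :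
    φ (rankOne u v) z₀ = 0 := by
  by_cases hz00 : z₀ = 0
  · rw [hz00, map_zero]
  have hu0 : u ≠ 0 := fun h => hα (by simp [h])
  set y := φ (rankOne u v) z₀ with hydef
  have hvy : ⟪v,y⟫ = 0 := S1 hloc hα hz₀
  obtain ⟨β, γ, hy⟩ := span2 hu0 (z := z₀) (y := y)
    (fun w hwu hwz => PAIR hadd hloc hα hwu hz₀ hwz)
  have hβ : β = 0 := by
    have h1 : ⟪v,y⟫ = β * ⟪v,u⟫ + γ * ⟪v,z₀⟫ := by
      rw [hy, inner_add_right, inner_smul_right, inner_smul_right]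
    rw [hvy, hz₀, mul_zero, add_zero] at h1
    exact (mul_eq_zero.mp h1.symm).resolve_right hα
  rw [hβ, zero_smul, zero_add] at hy
  by_cases hγ : γ = 0
  · rw [hy, hγ, zero_smul]
  · exfalso
    have hz1 : z₀ ∈ localSubspace (φ (rankOne u v)) {γ} :=
      mem_localSubspace_of_eigen hy
    rw [hloc (rankOne u v) γ] at hz1
    have hz2 := G1a hα hγ hz1
    rw [hz₀, mul_zero, zero_smul] at hz2
    exact hz00 hz2

/-- key lemma : rank-one operators with nonzero diagonal are fixed -/
lemma KEY1 {u v : H} (hα : ⟪v,u⟫ ≠ 0) : φ (rankOne u v) = rankOne u v := by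
  ext z
  have hdec : z = (z - (⟪v,u⟫⁻¹ * ⟪v,z⟫) • u) + (⟪v,u⟫⁻¹ * ⟪v,z⟫) • u := by abel
  have hvh : ⟪v, z - (⟪v,u⟫⁻¹ * ⟪v,z⟫) • u⟫ = 0 := by
    rw [inner_sub_right, inner_smul_right]
    field_simp
    ring
  calc φ (rankOne u v) z
      = φ (rankOne u v) (z - (⟪v,u⟫⁻¹ * ⟪v,z⟫) • u)
        + (⟪v,u⟫⁻¹ * ⟪v,z⟫) • (φ (rankOne u v) u) := by
        conv_lhs => rw [hdec]
        rw [map_add, map_smul]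
    _ = (⟪v,u⟫⁻¹ * ⟪v,z⟫) • (⟪v,u⟫ • u) := by
        rw [ZERO hadd hloc hα hvh, S2 hloc hα, zero_add]
    _ = rankOne u v z := by
        rw [rankOne_apply, smul_smul]
        congr 1
        field_simp

omit hloc in
lemma phi_zero_aux : φ 0 = 0 := by
  have := hadd 0 0
  rw [add_zero] at this
  have h2 := congrArg (fun X => X - φ 0) this
  simpa using h2.symm

/-- all rank-one operators are fixed -/
lemma KEYALL (u v : H) : φ (rankOne u v) = rankOne u v := by
  by_cases hu : u = 0
  · have h0 : rankOne u v = 0 := by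
      ext z; simp [rankOne_apply, hu]
    rw [h0, phi_zero_aux hadd]
  have huu : ⟪u,u⟫ ≠ 0 := inner_self_ne_zero.mpr hu
  by_cases hα : ⟪v,u⟫ ≠ 0
  · exact KEY1 hadd hloc hα
  push_neg at hα
  set t : ℂ := if ⟪v,u⟫ + ⟪u,u⟫ = 0 then 2 else 1 with htdef
  have ht0 : t ≠ 0 := by rw [htdef]; split <;> norm_num
  have htconj : (starRingEnd ℂ) t = t := by
    rw [htdef]; split
    · exact map_ofNat _ 2
    · exact map_one _
  have hα₂ : ⟪t • u, u⟫ ≠ 0 := by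
    rw [inner_smul_left, htconj]
    exact mul_ne_zero ht0 huu
  have hα₁ : ⟪v + t • u, u⟫ ≠ 0 := by
    rw [inner_add_left, inner_smul_left, htconj, htdef]
    split
    · rename_i hcase
      rw [hα] at hcase ⊢
      intro hcon
      rw [zero_add] at hcon hcase
      exact huu (by linear_combination hcon / 2)
    · rename_i hcase
      rw [one_mul]
      exact fun hcon => hcase (by rw [hα, zero_add] at hcon ⊢; exact hcon)
  have hsum : rankOne u v + rankOne u (t • u) = rankOne u (v + t • u) :=
    (rankOne_add_right u v (t • u)).symm
  have h1 := hadd (rankOne u v) (rankOne u (t • u))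
  rw [hsum, KEY1 hadd hloc hα₁, KEY1 hadd hloc hα₂] at h1
  have h2 := congrArg (fun X => X - rankOne u (t • u)) h1
  simp only [add_sub_cancel_right] at h2
  rw [← hsum] at h2
  rw [show rankOne u v + rankOne u (t • u) - rankOne u (t • u) = rankOne u v
    from add_sub_cancel_right _ _] at h2
  exact h2.symm

end Phi

theorem stmt15 (hH : ¬ FiniteDimensional ℂ H)
    (φ : (H →L[ℂ] H) → (H →L[ℂ] H))
    (hadd : ∀ T S : H →L[ℂ] H, φ (T + S) = φ T + φ S)
    (hloc : ∀ (T : H →L[ℂ] H) (lam : ℂ),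
      localSubspace (φ T) {lam} = localSubspace T {lam}) :
    ∀ T : H →L[ℂ] H, φ T = T := by
  intro T
  ext x
  by_contra hne0
  have hd0 : φ T x - T x ≠ 0 := sub_ne_zero.mpr hne0
  have hx0 : x ≠ 0 := by
    rintro rfl
    rw [map_zero, map_zero] at hne0
    exact hne0 rfl
  obtain ⟨e, hex, hed⟩ : ∃ e : H, ⟪e,x⟫ ≠ 0 ∧ ⟪e, φ T x - T x⟫ ≠ 0 := by
    by_cases h : ⟪x, φ T x - T x⟫ = 0
    · refine ⟨x + (φ T x - T x), ?_, ?_⟩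
      · have hdx : ⟪φ T x - T x, x⟫ = 0 := by
          rw [← inner_conj_symm ((φ T) x - T x) x, h, map_zero]
        rw [inner_add_left, hdx, add_zero]
        exact inner_self_ne_zero.mpr hx0
      · rw [inner_add_left, h, zero_add]
        exact inner_self_ne_zero.mpr hd0
    · exact ⟨x, inner_self_ne_zero.mpr hx0, h⟩
  set μ := -⟪e, φ T x - T x⟫ / ⟪e,x⟫ with hμdef
  have hμ0 : μ ≠ 0 := div_ne_zero (neg_ne_zero.mpr hed) hex
  have hμx : μ * ⟪e,x⟫ = -⟪e, φ T x - T x⟫ := by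
    rw [hμdef, div_mul_cancel₀ _ hex]
  obtain ⟨v, hvx⟩ : ∃ v : H, ⟪v,x⟫ = 1 := by
    refine ⟨(⟪x,x⟫)⁻¹ • x, ?_⟩
    rw [inner_smul_left, map_inv₀, inner_conj_symm]
    exact inv_mul_cancel₀ (inner_self_ne_zero.mpr hx0)
  obtain ⟨w, hew⟩ : ∃ w : H, ⟪e,w⟫ = 1 := by
    refine ⟨(⟪e,e⟫)⁻¹ • e, ?_⟩
    rw [inner_smul_right]
    exact inv_mul_cancel₀ (inner_self_ne_zero.mpr (fun h => hex (by simp [h])))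
  obtain ⟨vg, hg⟩ : ∃ vg : H, ∀ z : H, ⟪vg, z⟫ = μ * ⟪e,z⟫ - ⟪e, T z⟫ := by
    refine ⟨(starRingEnd ℂ) μ • e - (ContinuousLinearMap.adjoint T) e, fun z => ?_⟩
    rw [inner_sub_left, inner_smul_left, ContinuousLinearMap.adjoint_inner_left]
    simp
  obtain ⟨c, hc⟩ : ∃ c : H, c = -(φ T x) - ⟪vg, x⟫ • w := ⟨_, rfl⟩
  obtain ⟨F, hFapp, hFfix⟩ : ∃ F : H →L[ℂ] H,
      (∀ z : H, F z = ⟪vg,z⟫ • w + ⟪v,z⟫ • c) ∧ φ F = F := by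
    refine ⟨rankOne w vg + rankOne c v, fun z => ?_, ?_⟩
    · simp [rankOne_apply]
    · rw [hadd, KEYALL hadd hloc, KEYALL hadd hloc]
  have hmemA : (φ T + F) x = (0:ℂ) • x := by
    rw [ContinuousLinearMap.add_apply, hFapp x, hc, hvx, one_smul, zero_smul]
    abel
  have hx1 : x ∈ localSubspace (φ T + F) {0} := mem_localSubspace_of_eigen hmemA
  have hphiTF : φ (T + F) = φ T + F := by rw [hadd, hFfix]
  have hx2 : x ∈ localSubspace (T + F) {0} := by
    rw [← hloc (T + F) 0, hphiTF]
    exact hx1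
  have hec : ⟪e, c⟫ = 0 := by
    rw [hc, inner_sub_right, inner_neg_right, inner_smul_right, hew, mul_one,
      hg x]
    have hedx : ⟪e, φ T x - T x⟫ = ⟪e, φ T x⟫ - ⟪e, T x⟫ := inner_sub_right e _ _
    linear_combination hedx - hμx
  have hadj : ∀ z : H, ⟪e, (T + F) z⟫ = μ * ⟪e, z⟫ := by
    intro z
    rw [ContinuousLinearMap.add_apply, inner_add_right, hFapp z, inner_add_right,
      inner_smul_right, inner_smul_right, hew, mul_one, hec, mul_zero, add_zero,
      hg z]
    ring
  exact hex (lemF hx2 hμ0 hadj)
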